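/- Let n1, n2, n3, n4, m be nonnegative integers with n1 = n2 and m < n1; let q = max(n1, n2, n3, n4, m) and let Q be the q×q shift matrix over 𝔽₂. Then there exist q×q matrices G_A, G_B over 𝔽₂ such that, with G_S = Q^{q−n3} G_A Q^{q−n1} + Q^{q−n4} G_B Q^{q−n2} and G_M = Q^{q−n3} G_A Q^{q−m} + Q^{q−n4} G_B Q^{q−m}, one has G_M = 0 and rank(G_S) − dim(range(G_S) ∩ range(G_M)) = min(n1 − m, max(n3, n4)). -/

import Mathlib

/-- The `q × q` lower shift matrix over `𝔽₂`: entry `(i, j)` is `1` iff `i = j + 1`. -/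
def shiftQ (q : ℕ) : Matrix (Fin q) (Fin q) (ZMod 2) :=
  Matrix.of fun i j => if (i : ℕ) = (j : ℕ) + 1 then 1 else 0

/-- Source-to-destination transfer matrix
`G_S = Q^(q-n3) G_A Q^(q-n1) + Q^(q-n4) G_B Q^(q-n2)`. -/
def GSmat (q n1 n2 n3 n4 : ℕ) (GA GB : Matrix (Fin q) (Fin q) (ZMod 2)) :
    Matrix (Fin q) (Fin q) (ZMod 2) :=
  shiftQ q ^ (q - n3) * GA * shiftQ q ^ (q - n1) +
    shiftQ q ^ (q - n4) * GB * shiftQ q ^ (q - n2)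

/-- Interference transfer matrix
`G_M = Q^(q-n3) G_A Q^(q-m) + Q^(q-n4) G_B Q^(q-m)`. -/
def GMmat (q n3 n4 m : ℕ) (GA GB : Matrix (Fin q) (Fin q) (ZMod 2)) :
    Matrix (Fin q) (Fin q) (ZMod 2) :=
  shiftQ q ^ (q - n3) * GA * shiftQ q ^ (q - m) +
    shiftQ q ^ (q - n4) * GB * shiftQ q ^ (q - m)

/-- The achievable rate `rank G_S - dim (range G_S ∩ range G_M)` of a linear scheme. -/
noncomputable def linRate (q : ℕ) (GS GM : Matrix (Fin q) (Fin q) (ZMod 2)) : ℕ :=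
  GS.rank - Module.finrank (ZMod 2)
    ↥(LinearMap.range GS.mulVecLin ⊓ LinearMap.range GM.mulVecLin)

/- ### Auxiliary machinery -/

open Matrix

lemma shiftQ_pow (q k : ℕ) (i j : Fin q) :
    (shiftQ q ^ k) i j = if (i : ℕ) = (j : ℕ) + k then 1 else 0 := by
  induction k generalizing i j with
  | zero =>
    simp [Matrix.one_apply, Fin.ext_iff]
  | succ k ih =>
    rw [pow_succ, Matrix.mul_apply]
    have hterm : ∀ l : Fin q, (shiftQ q ^ k) i l * shiftQ q l j
        = if (l : ℕ) = (j : ℕ) + 1 then (if (i : ℕ) = (l : ℕ) + k then 1 else 0) else 0 := by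
      intro l
      rw [ih, shiftQ]
      simp only [Matrix.of_apply]
      split_ifs <;> simp
    rw [Finset.sum_congr rfl (fun l _ => hterm l)]
    by_cases h : (j : ℕ) + 1 < q
    · have key : ∀ l : Fin q, ((l : ℕ) = (j : ℕ) + 1) ↔ l = ⟨(j : ℕ) + 1, h⟩ := by
        intro l; simp [Fin.ext_iff]
      simp only [key]
      rw [Finset.sum_ite_eq' Finset.univ]
      simp only [Finset.mem_univ, if_true]
      have : ((j : ℕ) + 1) + k = (j : ℕ) + (k + 1) := by omega
      simp only [this]
    · rw [Finset.sum_eq_zero, if_neg]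
      · have := i.isLt; omega
      · intro l _
        rw [if_neg]
        have := l.isLt; omega

lemma shift_pow_mul (q a : ℕ) (M : Matrix (Fin q) (Fin q) (ZMod 2)) (i j : Fin q) :
    (shiftQ q ^ a * M) i j
      = if h : a ≤ (i : ℕ) then M ⟨(i : ℕ) - a, by have := i.isLt; omega⟩ j else 0 := by
  rw [Matrix.mul_apply]
  by_cases h : a ≤ (i : ℕ)
  · rw [dif_pos h, Finset.sum_eq_single (⟨(i : ℕ) - a, by have := i.isLt; omega⟩ : Fin q)]
    · rw [shiftQ_pow, if_pos (by simp; omega), one_mul]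
    · intro l _ hl
      rw [shiftQ_pow, if_neg, zero_mul]
      intro hc
      refine hl (Fin.ext ?_)
      simp only [Fin.val_mk]
      omega
    · simp
  · rw [dif_neg h, Finset.sum_eq_zero]
    intro l _
    rw [shiftQ_pow, if_neg (by omega), zero_mul]

lemma mul_shift_pow (q b : ℕ) (M : Matrix (Fin q) (Fin q) (ZMod 2)) (i j : Fin q) :
    (M * shiftQ q ^ b) i j
      = if h : (j : ℕ) + b < q then M i ⟨(j : ℕ) + b, h⟩ else 0 := by
  rw [Matrix.mul_apply]
  by_cases h : (j : ℕ) + b < q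
  · rw [dif_pos h, Finset.sum_eq_single (⟨(j : ℕ) + b, h⟩ : Fin q)]
    · rw [shiftQ_pow, if_pos (by simp), mul_one]
    · intro l _ hl
      rw [shiftQ_pow, if_neg, mul_zero]
      intro hc
      exact hl (Fin.ext (by simpa using hc))
    · simp
  · rw [dif_neg h, Finset.sum_eq_zero]
    intro l _
    rw [shiftQ_pow, if_neg (by have := l.isLt; omega), mul_zero]

/-- Relay matrix achieving the rate. -/
def GAmat (q n3 m r : ℕ) : Matrix (Fin q) (Fin q) (ZMod 2) :=
  Matrix.of fun i j => if ((i : ℕ) + q = (j : ℕ) + m + n3 ∧ n3 ≤ (i : ℕ) + r) then 1 else 0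

/-- The resulting source transfer matrix. -/
def GSr (q n1 m r : ℕ) : Matrix (Fin q) (Fin q) (ZMod 2) :=
  Matrix.of fun i j => if ((i : ℕ) + n1 = (j : ℕ) + q + m ∧ q ≤ (i : ℕ) + r) then 1 else 0

lemma C_apply (q n3 m r : ℕ) (hn3 : n3 ≤ q) (hr : r ≤ n3) (i j : Fin q) :
    (shiftQ q ^ (q - n3) * GAmat q n3 m r) i j
      = if ((i : ℕ) = (j : ℕ) + m ∧ q ≤ (i : ℕ) + r) then 1 else 0 := by
  rw [shift_pow_mul]
  split
  · next h =>
    simp only [GAmat, Matrix.of_apply]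
    refine if_congr ?_ rfl rfl
    have := i.isLt
    constructor <;> intro <;> omega
  · next h =>
    rw [if_neg]
    have := i.isLt
    omega

lemma GM_zero (q n3 m r : ℕ) (hn3 : n3 ≤ q) (hr : r ≤ n3) :
    shiftQ q ^ (q - n3) * GAmat q n3 m r * shiftQ q ^ (q - m) = 0 := by
  ext i j
  rw [mul_shift_pow, Matrix.zero_apply]
  split
  · next h =>
    rw [C_apply q n3 m r hn3 hr, if_neg]
    have := i.isLt
    simp only [Fin.val_mk]
    omega
  · rfl

lemma GS_eq (q n1 n3 m r : ℕ) (hn3 : n3 ≤ q) (hr : r ≤ n3) (hn1 : n1 ≤ q) :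
    shiftQ q ^ (q - n3) * GAmat q n3 m r * shiftQ q ^ (q - n1) = GSr q n1 m r := by
  ext i j
  rw [mul_shift_pow]
  have hi := i.isLt
  have hj := j.isLt
  split
  · next h =>
    rw [C_apply q n3 m r hn3 hr]
    simp only [GSr, Matrix.of_apply, Fin.val_mk]
    refine if_congr ?_ rfl rfl
    constructor <;> intro <;> omega
  · next h =>
    simp only [GSr, Matrix.of_apply]
    rw [if_neg]
    omega

lemma rank_GSr (q n1 m r : ℕ) (hn1 : n1 ≤ q) (hr : r + m ≤ n1) :
    (GSr q n1 m r).rank = r := by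
  classical
  set b : Fin r → (Fin q → ZMod 2) :=
    fun t => Pi.single (⟨q - 1 - (t : ℕ), by have := t.isLt; omega⟩ : Fin q) 1 with hb
  have hbli : LinearIndependent (ZMod 2) b := by
    have hfinj : Function.Injective
        (fun t : Fin r => (⟨q - 1 - (t : ℕ), by have := t.isLt; omega⟩ : Fin q)) := by
      intro s t hst
      have hs := s.isLt
      have ht := t.isLt
      rw [Fin.ext_iff] at hst ⊢
      simp only [Fin.val_mk] at hst
      omega
    have := (Pi.basisFun (ZMod 2) (Fin q)).linearIndependent.comp _ hfinj
    simpa [hb, Function.comp_def, Pi.basisFun_apply] using this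
  have hspan : Submodule.span (ZMod 2) (Set.range (GSr q n1 m r)ᵀ)
      = Submodule.span (ZMod 2) (Set.range b) := by
    apply le_antisymm
    · rw [Submodule.span_le]
      rintro x ⟨j, rfl⟩
      have hj := j.isLt
      by_cases hcol : n1 ≤ (j : ℕ) + m + r ∧ (j : ℕ) + m < n1
      · have ht : n1 - m - 1 - (j : ℕ) < r := by omega
        have hxb : (GSr q n1 m r)ᵀ j = b ⟨n1 - m - 1 - (j : ℕ), ht⟩ := by
          funext i
          have hi := i.isLt
          simp only [hb, Matrix.transpose_apply, GSr, Matrix.of_apply, Pi.single_apply,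
            Fin.ext_iff, Fin.val_mk]
          refine if_congr ?_ rfl rfl
          constructor <;> intro <;> omega
        rw [hxb]
        exact Submodule.subset_span ⟨_, rfl⟩
      · have hx0 : (GSr q n1 m r)ᵀ j = 0 := by
          funext i
          have hi := i.isLt
          simp only [Matrix.transpose_apply, GSr, Matrix.of_apply, Pi.zero_apply]
          rw [if_neg]
          omega
        rw [hx0]
        exact Submodule.zero_mem _
    · rw [Submodule.span_le]
      rintro x ⟨t, rfl⟩
      have ht := t.isLt
      have hjlt : n1 - m - 1 - (t : ℕ) < q := by omega
      have hxb : b t = (GSr q n1 m r)ᵀ ⟨n1 - m - 1 - (t : ℕ), hjlt⟩ := by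
        funext i
        have hi := i.isLt
        simp only [hb, Matrix.transpose_apply, GSr, Matrix.of_apply, Pi.single_apply,
          Fin.ext_iff, Fin.val_mk]
        refine (if_congr ?_ rfl rfl).symm
        constructor <;> intro <;> omega
      rw [hxb]
      exact Submodule.subset_span ⟨_, rfl⟩
  rw [Matrix.rank_eq_finrank_span_cols,
    show (GSr q n1 m r).col = (GSr q n1 m r)ᵀ from rfl, hspan, finrank_span_eq_card hbli, Fintype.card_fin]

/-- Case `n1 = n2`, `m < n1`: the upper bound is achievable with `G_M = 0`. -/
theorem rate_achievable_case6
    (n1 n2 n3 n4 m q : ℕ) (hq : q = max n1 (max n2 (max n3 (max n4 m))))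
    (h12 : n1 = n2) (hm : m < n1) :
    ∃ GA GB : Matrix (Fin q) (Fin q) (ZMod 2),
      GMmat q n3 n4 m GA GB = 0 ∧
      linRate q (GSmat q n1 n2 n3 n4 GA GB) (GMmat q n3 n4 m GA GB)
        = min (n1 - m) (max n3 n4) := by
  have hn1 : n1 ≤ q := by omega
  have hn3 : n3 ≤ q := by omega
  have hn4 : n4 ≤ q := by omega
  by_cases h34 : n4 ≤ n3
  · set r : ℕ := min (n1 - m) n3 with hrdef
    have hrn3 : r ≤ n3 := min_le_right _ _
    have hrm : r + m ≤ n1 := by omega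
    refine ⟨GAmat q n3 m r, 0, ?_, ?_⟩
    · rw [GMmat, GM_zero q n3 m r hn3 hrn3]
      simp
    · have hGM : GMmat q n3 n4 m (GAmat q n3 m r) 0 = 0 := by
        rw [GMmat, GM_zero q n3 m r hn3 hrn3]
        simp
      have hGS : GSmat q n1 n2 n3 n4 (GAmat q n3 m r) 0 = GSr q n1 m r := by
        rw [GSmat, GS_eq q n1 n3 m r hn3 hrn3 hn1]
        simp
      rw [hGM, hGS, linRate]
      rw [Matrix.mulVecLin_zero, LinearMap.range_zero, inf_bot_eq, finrank_bot,
        Nat.sub_zero, rank_GSr q n1 m r hn1 hrm]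
      omega
  · set r : ℕ := min (n1 - m) n4 with hrdef
    have hrn4 : r ≤ n4 := min_le_right _ _
    have hrm : r + m ≤ n1 := by omega
    refine ⟨0, GAmat q n4 m r, ?_, ?_⟩
    · rw [GMmat, GM_zero q n4 m r hn4 hrn4]
      simp
    · have hGM : GMmat q n3 n4 m 0 (GAmat q n4 m r) = 0 := by
        rw [GMmat, GM_zero q n4 m r hn4 hrn4]
        simp
      have hGS : GSmat q n1 n2 n3 n4 0 (GAmat q n4 m r) = GSr q n1 m r := by
        rw [GSmat, ← h12, GS_eq q n1 n4 m r hn4 hrn4 hn1]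
        simp
      rw [hGM, hGS, linRate]
      rw [Matrix.mulVecLin_zero, LinearMap.range_zero, inf_bot_eq, finrank_bot,
        Nat.sub_zero, rank_GSr q n1 m r hn1 hrm]
      omega
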